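/- Let a > 0 and 0 < z < 1, let L be the Meixner moment functional L[f] = Σ_{x=0}^{∞} f(x)·(a)_x z^x / x!, and let (P_n)_{n≥0} be a monic orthogonal polynomial sequence for L with recurrence coefficients β_n, γ_n. Then for all n ≥ 0 the structure relation x·P_n(x−1) = z γ_n P_{n−1}(x) + (1−z)(γ_{n+1} − γ_n) P_n(x) + P_{n+1}(x) holds as an identity of polynomials (with P_{−1} = 0, γ_0 = 0). -/

import Mathlib

open Polynomial Filter Topology

lemma hasseDeriv_eq_of_deg (p : ℝ[X]) (n : ℕ) (hp : p.natDegree ≤ n + 1) :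
    hasseDeriv n p = C (p.coeff n) + C (((n:ℝ)+1) * p.coeff (n+1)) * X := by
  ext k
  rw [hasseDeriv_coeff]
  match k with
  | 0 => simp
  | 1 =>
      have : (n + 1).choose n = n + 1 := Nat.choose_succ_self_right n
      simp only [this, coeff_add, coeff_C, coeff_mul_X, Nat.add_comm 1 n]
      simp
  | (k+2) =>
      have h1 : p.natDegree < k + 2 + n := by omega
      simp [coeff_eq_zero_of_natDegree_lt h1, coeff_C, coeff_X, coeff_one]

lemma coeff_comp_X_add_C' (p : ℝ[X]) (r : ℝ) (n : ℕ) (hp : p.natDegree ≤ n + 1) :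
    (p.comp (X + C r)).coeff n = p.coeff n + ((n:ℝ)+1) * r * p.coeff (n+1) := by
  rw [← taylor_apply, taylor_coeff, hasseDeriv_eq_of_deg p n hp]
  simp; ring

lemma coeff_X_add_C_mul (a : ℝ) (q : ℝ[X]) (m : ℕ) :
    ((X + C a) * q).coeff (m+1) = q.coeff m + a * q.coeff (m+1) := by
  rw [add_mul, coeff_add, coeff_X_mul, coeff_C_mul]
section
variable (a z : ℝ) (ha : 0 < a) (hz0 : 0 < z) (hz1 : z < 1)

noncomputable def mw (x : ℕ) : ℝ := (ascPochhammer ℝ x).eval a * z ^ x / x.factorial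

include ha in
lemma poch_pos : ∀ x : ℕ, 0 < (ascPochhammer ℝ x).eval a := by
  intro x; induction x with
  | zero => simp
  | succ n ih =>
      rw [ascPochhammer_succ_eval]
      exact mul_pos ih (add_pos_of_pos_of_nonneg ha (Nat.cast_nonneg n))

include ha hz0 in
lemma mw_pos (x : ℕ) : 0 < mw a z x := by
  unfold mw
  have hp := poch_pos a ha x
  have hf : (0:ℝ) < x.factorial := by exact_mod_cast x.factorial_pos
  exact div_pos (mul_pos hp (pow_pos hz0 x)) hf

lemma mw_succ (x : ℕ) : mw a z (x+1) = z * (a + x) * mw a z x / (x+1) := by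
  unfold mw
  rw [ascPochhammer_succ_eval, Nat.factorial_succ]
  have h1 : ((x:ℝ)+1) ≠ 0 := by positivity
  have h2 : ((x.factorial : ℝ)) ≠ 0 := by exact_mod_cast x.factorial_ne_zero
  push_cast
  field_simp
  ring

include ha hz0 hz1 in
lemma summable_pow_mw (d : ℕ) :
    Summable (fun x : ℕ => ((x:ℝ)+1)^d * mw a z x) := by
  have hfpos : ∀ x : ℕ, 0 < ((x:ℝ)+1)^d * mw a z x := fun x => by
    have := mw_pos a z ha hz0 x; positivity
  apply summable_of_ratio_test_tendsto_lt_one hz1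
    (Eventually.of_forall fun n => (hfpos n).ne')
  have t1 : Tendsto (fun n : ℕ => 1/((n:ℝ)+1)) atTop (𝓝 0) :=
    tendsto_one_div_add_atTop_nhds_zero_nat
  have t2 : Tendsto (fun n : ℕ => (1 + 1/((n:ℝ)+1))^d * (z * ((a-1) * (1/((n:ℝ)+1)) + 1)))
      atTop (𝓝 ((1+0:ℝ)^d * (z * ((a-1) * 0 + 1)))) :=
    ((tendsto_const_nhds.add t1).pow d).mul
      (tendsto_const_nhds.mul (((tendsto_const_nhds.mul t1)).add tendsto_const_nhds))
  simp only [add_zero, mul_zero, zero_add, one_pow, mul_one, one_mul] at t2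
  refine Tendsto.congr (fun n => ?_) t2
  have h1 : ((n:ℝ)+1) ≠ 0 := by positivity
  have hw := mw_pos a z ha hz0 n
  have hw1 := mw_pos a z ha hz0 (n+1)
  rw [Real.norm_of_nonneg (le_of_lt (hfpos (n+1))), Real.norm_of_nonneg (le_of_lt (hfpos n))]
  rw [mw_succ]
  push_cast
  rw [eq_div_iff (by positivity)]
  rw [show (1:ℝ) + 1/((n:ℝ)+1) = ((n:ℝ)+1+1)/((n:ℝ)+1) by field_simp, div_pow]
  field_simp
  ring

include ha hz0 hz1 in
lemma summable_poly_mw (p : ℝ[X]) :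
    Summable (fun x : ℕ => p.eval (x:ℝ) * mw a z x) := by
  set d := p.natDegree with hd
  set M : ℝ := ∑ i ∈ Finset.range (d+1), |p.coeff i| with hM
  have key : ∀ x : ℕ, ‖p.eval (x:ℝ) * mw a z x‖ ≤ M * (((x:ℝ)+1)^d * mw a z x) := by
    intro x
    have hw := mw_pos a z ha hz0 x
    rw [norm_mul, Real.norm_of_nonneg hw.le, ← mul_assoc]
    apply mul_le_mul_of_nonneg_right _ hw.le
    calc ‖p.eval (x:ℝ)‖ = |∑ i ∈ Finset.range (d+1), p.coeff i * (x:ℝ)^i| := by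
          rw [eval_eq_sum_range]; rfl
      _ ≤ ∑ i ∈ Finset.range (d+1), |p.coeff i * (x:ℝ)^i| := Finset.abs_sum_le_sum_abs _ _
      _ ≤ ∑ i ∈ Finset.range (d+1), |p.coeff i| * ((x:ℝ)+1)^d := by
          apply Finset.sum_le_sum
          intro i hi
          rw [abs_mul]
          apply mul_le_mul_of_nonneg_left _ (abs_nonneg _)
          rw [abs_pow, Nat.abs_cast]
          calc (x:ℝ)^i ≤ ((x:ℝ)+1)^i := by
                apply pow_le_pow_left₀ (by positivity) (by linarith)
            _ ≤ ((x:ℝ)+1)^d := by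
                apply pow_le_pow_right₀ (by linarith [Nat.cast_nonneg (α := ℝ) x])
                exact Nat.lt_succ_iff.mp (Finset.mem_range.mp hi)
      _ = M * ((x:ℝ)+1)^d := by rw [← Finset.sum_mul]
  exact Summable.of_norm_bounded ((summable_pow_mw a z ha hz0 hz1 d).mul_left M) key

end
noncomputable def Lm (w : ℕ → ℝ) (p : ℝ[X]) : ℝ := ∑' x : ℕ, p.eval (x:ℝ) * w x

section
variable (w : ℕ → ℝ) (hsum : ∀ p : ℝ[X], Summable fun x : ℕ => p.eval (x:ℝ) * w x)

lemma Lm_zero : Lm w 0 = 0 := by simp [Lm]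

include hsum in
lemma Lm_add (p q : ℝ[X]) : Lm w (p + q) = Lm w p + Lm w q := by
  unfold Lm
  simp only [eval_add, add_mul]
  exact Summable.tsum_add (hsum p) (hsum q)

lemma Lm_Cmul (c : ℝ) (p : ℝ[X]) : Lm w (C c * p) = c * Lm w p := by
  unfold Lm
  simp only [eval_mul, eval_C, mul_assoc]
  exact tsum_mul_left

include hsum in
lemma Lm_sub (p q : ℝ[X]) : Lm w (p - q) = Lm w p - Lm w q := by
  have h := Lm_add w hsum (p - q) q
  simp at h; linarith

include hsum in
lemma Lm_sum {ι : Type*} (s : Finset ι) (f : ι → ℝ[X]) :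
    Lm w (∑ i ∈ s, f i) = ∑ i ∈ s, Lm w (f i) := by
  classical
  induction s using Finset.induction_on with
  | empty => simp [Lm_zero]
  | insert _ _ hx ih =>
      rw [Finset.sum_insert hx, Finset.sum_insert hx, Lm_add w hsum, ih]

end

section
variable (P : ℕ → ℝ[X]) (hmonic : ∀ n, (P n).Monic) (hdeg : ∀ n, (P n).natDegree = n)

include hmonic hdeg in
lemma coeff_self_P : ∀ n, (P n).coeff n = 1 := fun n => by
  have := (hmonic n).coeff_natDegree
  rwa [hdeg n] at this

include hmonic hdeg in
lemma span_lemma : ∀ N (q : ℝ[X]), q.natDegree ≤ N →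
    ∃ c : ℕ → ℝ, q = ∑ k ∈ Finset.range (N+1), C (c k) * P k := by
  intro N
  induction N with
  | zero =>
      intro q hq
      refine ⟨fun _ => q.coeff 0, ?_⟩
      have hP0 : P 0 = 1 := (Monic.natDegree_eq_zero (hmonic 0)).mp (hdeg 0)
      rw [Finset.sum_range_one, hP0, mul_one]
      conv_lhs => rw [eq_C_of_natDegree_le_zero hq]
  | succ N ih =>
      intro q hq
      set r := q - C (q.coeff (N+1)) * P (N+1) with hr
      have hrdeg : r.natDegree ≤ N := by
        rw [natDegree_le_iff_coeff_eq_zero]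
        intro m hm
        rcases eq_or_lt_of_le (Nat.succ_le_of_lt hm) with hm' | hm'
        · rw [hr, coeff_sub, coeff_C_mul, ← hm', coeff_self_P P hmonic hdeg (N+1)]
          ring
        · have h1 : q.coeff m = 0 := coeff_eq_zero_of_natDegree_lt (lt_of_le_of_lt hq hm')
          have h2 : (C (q.coeff (N+1)) * P (N+1)).natDegree < m := by
            apply lt_of_le_of_lt _ hm'
            apply le_trans (natDegree_C_mul_le _ _)
            rw [hdeg]
          rw [hr, coeff_sub, h1, coeff_eq_zero_of_natDegree_lt h2]
          ring
      obtain ⟨c, hc⟩ := ih r hrdeg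
      refine ⟨fun k => if k = N+1 then q.coeff (N+1) else c k, ?_⟩
      rw [Finset.sum_range_succ]
      dsimp only
      rw [if_pos rfl,
        Finset.sum_congr rfl (fun k hk => by
          rw [if_neg (Nat.ne_of_lt (Finset.mem_range.mp hk))]), ← hc, hr]
      ring

end

section
variable (w : ℕ → ℝ) (hsum : ∀ p : ℝ[X], Summable fun x : ℕ => p.eval (x:ℝ) * w x)
  (P : ℕ → ℝ[X]) (h : ℕ → ℝ)
  (hmonic : ∀ n, (P n).Monic) (hdeg : ∀ n, (P n).natDegree = n)
  (horth : ∀ n m : ℕ, Lm w (P n * P m) = if n = m then h n else 0)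

include hsum hmonic hdeg horth in
lemma Lm_mul_P (q : ℝ[X]) (m : ℕ) (hq : q.natDegree ≤ m + 1) :
    Lm w (q * P m) = (q.coeff m - q.coeff (m+1) * (P (m+1)).coeff m) * h m := by
  set r := q - C (q.coeff (m+1)) * P (m+1) with hr
  have hrdeg : r.natDegree ≤ m := by
    rw [natDegree_le_iff_coeff_eq_zero]
    intro k hk
    rcases eq_or_lt_of_le (Nat.succ_le_of_lt hk) with hk' | hk'
    · rw [hr, coeff_sub, coeff_C_mul, ← hk', coeff_self_P P hmonic hdeg (m+1)]
      ring
    · have h1 : q.coeff k = 0 := coeff_eq_zero_of_natDegree_lt (lt_of_le_of_lt hq hk')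
      have h2 : (C (q.coeff (m+1)) * P (m+1)).natDegree < k := by
        apply lt_of_le_of_lt _ hk'
        apply le_trans (natDegree_C_mul_le _ _)
        rw [hdeg]
      rw [hr, coeff_sub, h1, coeff_eq_zero_of_natDegree_lt h2]
      ring
  obtain ⟨c, hc⟩ := span_lemma P hmonic hdeg m r hrdeg
  have hcm : c m = r.coeff m := by
    rw [hc, finset_sum_coeff]
    rw [Finset.sum_eq_single m]
    · rw [coeff_C_mul, coeff_self_P P hmonic hdeg m, mul_one]
    · intro k hk hkm
      rw [coeff_C_mul, coeff_eq_zero_of_natDegree_lt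
        (by rw [hdeg]; exact lt_of_le_of_ne (Nat.lt_succ_iff.mp (Finset.mem_range.mp hk)) hkm)]
      ring
    · intro hm; exact absurd (Finset.self_mem_range_succ m) hm
  have hq' : q = r + C (q.coeff (m+1)) * P (m+1) := by rw [hr]; ring
  have step1 : Lm w (q * P m) = Lm w (r * P m) + q.coeff (m+1) * Lm w (P (m+1) * P m) := by
    conv_lhs => rw [hq']
    rw [add_mul, Lm_add w hsum, mul_assoc, Lm_Cmul]
  rw [step1, horth, if_neg (Nat.succ_ne_self m), mul_zero, add_zero]
  have step2 : Lm w (r * P m) = c m * h m := by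
    rw [hc, Finset.sum_mul, Lm_sum w hsum]
    rw [Finset.sum_congr rfl (fun k _ => by rw [mul_assoc, Lm_Cmul, horth])]
    simp only [mul_ite, mul_zero]
    rw [Finset.sum_ite_eq' (Finset.range (m+1)) m (fun k => c k * h k),
      if_pos (Finset.self_mem_range_succ m)]
  rw [step2, hcm, hr, coeff_sub, coeff_C_mul]

include hsum hmonic hdeg horth in
lemma Lm_mul_P_of_le (q : ℝ[X]) (m : ℕ) (hq : q.natDegree ≤ m) :
    Lm w (q * P m) = q.coeff m * h m := by
  rw [Lm_mul_P w hsum P h hmonic hdeg horth q m (le_trans hq (Nat.le_succ m)),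
    coeff_eq_zero_of_natDegree_lt (lt_of_le_of_lt hq (Nat.lt_succ_self m))]
  ring

include hsum hmonic hdeg horth in
lemma Lm_mul_P_of_lt (q : ℝ[X]) (m : ℕ) (hq : q.natDegree < m) :
    Lm w (q * P m) = 0 := by
  rw [Lm_mul_P_of_le w hsum P h hmonic hdeg horth q m (le_of_lt hq),
    coeff_eq_zero_of_natDegree_lt hq]
  ring

end
lemma Lm_shift (a z : ℝ) (w : ℕ → ℝ)
    (hsum : ∀ p : ℝ[X], Summable fun x : ℕ => p.eval (x:ℝ) * w x)
    (hwp : ∀ x : ℕ, w (x+1) = z * (a + x) * w x / (x+1)) (p : ℝ[X]) :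
    Lm w (X * p.comp (X + C (-1))) = z * Lm w ((X + C a) * p) := by
  unfold Lm
  rw [Summable.tsum_eq_zero_add (hsum (X * p.comp (X + C (-1))))]
  have h0 : (X * p.comp (X + C (-1))).eval ((0:ℕ):ℝ) * w 0 = 0 := by simp
  rw [h0, zero_add]
  have hterm : ∀ n : ℕ, (X * p.comp (X + C (-1))).eval (((n+1:ℕ)):ℝ) * w (n+1)
      = z * (((X + C a) * p).eval ((n:ℕ):ℝ) * w n) := by
    intro n
    rw [hwp n]
    simp only [eval_mul, eval_comp, eval_add, eval_X, eval_C]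
    rw [show ((n+1:ℕ):ℝ) + -1 = (n:ℝ) by push_cast; ring]
    have h1 : ((n:ℝ)+1) ≠ 0 := by positivity
    push_cast
    field_simp
    ring
  rw [tsum_congr hterm, tsum_mul_left]

/-- structure relation for the Meixner polynomials:
x·Pₙ(x−1) = zγₙ P_{n−1}(x) + (1−z)(γ_{n+1} − γₙ) Pₙ(x) + P_{n+1}(x). -/
theorem meixner_structure_relation_backward
    (a z : ℝ) (ha : 0 < a) (hz0 : 0 < z) (hz1 : z < 1)
    (w : ℕ → ℝ)
    (hw : ∀ x : ℕ, w x = (ascPochhammer ℝ x).eval a * z ^ x / x.factorial)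
    (P : ℕ → Polynomial ℝ) (h : ℕ → ℝ)
    (hmonic : ∀ n, (P n).Monic) (hdeg : ∀ n, (P n).natDegree = n)
    (hh : ∀ n, h n ≠ 0)
    (horth : ∀ n m : ℕ,
      (∑' x : ℕ, (P n * P m).eval (x : ℝ) * w x) = if n = m then h n else 0)
    (β γ : ℕ → ℝ) (hγ0 : γ 0 = 0)
    (hrec : ∀ n : ℕ, X * P n = P (n + 1) + C (β n) * P n + C (γ n) * P (n - 1)) :
    ∀ n : ℕ,
      X * (P n).comp (X - 1) =
        C (z * γ n) * P (n - 1) + C ((1 - z) * (γ (n + 1) - γ n)) * P n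
          + P (n + 1) := by
  -- basic setup
  have hwmw : ∀ x, w x = mw a z x := fun x => by rw [hw x]; rfl
  have hsum : ∀ p : ℝ[X], Summable fun x : ℕ => p.eval (x:ℝ) * w x := by
    intro p; simp only [hwmw]; exact summable_poly_mw a z ha hz0 hz1 p
  have hwp : ∀ x : ℕ, w (x+1) = z * (a + x) * w x / (x+1) := fun x => by
    rw [hwmw, hwmw]; exact mw_succ a z x
  have horth' : ∀ n m, Lm w (P n * P m) = if n = m then h n else 0 := horth
  have hP1 : ∀ k, (P k).coeff k = 1 := coeff_self_P P hmonic hdeg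
  have Ladd := Lm_add w hsum
  have Lsub := Lm_sub w hsum
  have LC := Lm_Cmul w
  have pair := Lm_mul_P w hsum P h hmonic hdeg horth'
  have pairle := Lm_mul_P_of_le w hsum P h hmonic hdeg horth'
  have pairlt := Lm_mul_P_of_lt w hsum P h hmonic hdeg horth'
  have horthne : ∀ n m, n ≠ m → Lm w (P n * P m) = 0 := fun n m hnm => by
    rw [horth', if_neg hnm]
  have Lshift := Lm_shift a z w hsum hwp
  -- composition facts
  have hcompdeg : ∀ (k:ℕ) (r:ℝ), ((P k).comp (X + C r)).natDegree = k := fun k r => by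
    rw [← taylor_apply, natDegree_taylor, hdeg]
  have hcomptop : ∀ (k:ℕ) (r:ℝ), ((P k).comp (X + C r)).coeff k = 1 := fun k r => by
    rw [coeff_comp_X_add_C' _ _ _ (by rw [hdeg]; exact Nat.le_succ k), hP1,
      coeff_eq_zero_of_natDegree_lt (by rw [hdeg]; exact Nat.lt_succ_self k)]
    ring
  have hcompsub : ∀ (k:ℕ) (r:ℝ), 1 ≤ k → ((P k).comp (X + C r)).coeff (k-1)
      = (P k).coeff (k-1) + k * r := by
    intro k r hk
    rw [coeff_comp_X_add_C' _ _ _ (by rw [hdeg]; omega),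
      show k - 1 + 1 = k from by omega, hP1, Nat.cast_sub hk]
    push_cast
    ring
  -- h recursion
  have hhγ : ∀ n, h (n+1) = γ (n+1) * h n := by
    intro n
    have e1 : Lm w ((X * P n) * P (n+1)) = h (n+1) := by
      rw [hrec n,
        show (P (n+1) + C (β n) * P n + C (γ n) * P (n-1)) * P (n+1)
          = P (n+1) * P (n+1) + C (β n) * (P n * P (n+1)) + C (γ n) * (P (n-1) * P (n+1))
          from by ring,
        Ladd, Ladd, LC, LC, horth', if_pos rfl,
        horthne n (n+1) (by omega), horthne (n-1) (n+1) (by omega)]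
      ring
    have e2 : Lm w ((X * P n) * P (n+1)) = γ (n+1) * h n := by
      rw [show (X * P n) * P (n+1) = (X * P (n+1)) * P n from by ring, hrec (n+1),
        Nat.add_sub_cancel,
        show (P (n+2) + C (β (n+1)) * P (n+1) + C (γ (n+1)) * P n) * P n
          = P (n+2) * P n + C (β (n+1)) * (P (n+1) * P n) + C (γ (n+1)) * (P n * P n)
          from by ring,
        Ladd, Ladd, LC, LC, horthne (n+2) n (by omega), horthne (n+1) n (by omega),
        horth', if_pos rfl]
      ring
    rw [← e1, e2]
  have hβL : ∀ n, Lm w ((X * P n) * P n) = β n * h n := by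
    intro n
    rw [hrec n,
      show (P (n+1) + C (β n) * P n + C (γ n) * P (n-1)) * P n
        = P (n+1) * P n + C (β n) * (P n * P n) + C (γ n) * (P (n-1) * P n) from by ring,
      Ladd, Ladd, LC, LC, horthne (n+1) n (by omega), horth', if_pos rfl]
    have : γ n * Lm w (P (n-1) * P n) = 0 := by
      rcases Nat.eq_zero_or_pos n with h0 | h0
      · rw [h0, hγ0]; ring
      · rw [horthne (n-1) n (by omega)]; ring
    rw [this]; ring
  -- pairing values for shifted polynomials
  have TP_self : ∀ k, Lm w ((P k).comp (X + C (-1)) * P k) = h k := fun k => by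
    rw [pairle _ _ (le_of_eq (hcompdeg k (-1))), hcomptop, one_mul]
  have TP_pred : ∀ k, 1 ≤ k → Lm w ((P k).comp (X + C (-1)) * P (k-1)) = -(k:ℝ) * h (k-1) := by
    intro k hk
    have hp := pair ((P k).comp (X + C (-1))) (k-1) (by rw [hcompdeg]; omega)
    rw [show k - 1 + 1 = k from by omega] at hp
    rw [hp, hcomptop, hcompsub k (-1) hk]
    ring
  -- Step A : structure relation with undetermined middle coefficient
  have SA : ∀ n, X * (P n).comp (X + C (-1))
      = P (n+1) + C (z * (β n + a + (n:ℝ))) * P n + C (z * γ n) * P (n-1) := by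
    intro n
    set Q : ℝ[X] := X * (P n).comp (X + C (-1)) - P (n+1) with hQ
    have hQdeg : Q.natDegree ≤ n := by
      rw [natDegree_le_iff_coeff_eq_zero]
      intro m hm
      obtain ⟨m', rfl⟩ : ∃ m', m = m' + 1 := ⟨m - 1, by omega⟩
      rw [hQ, coeff_sub, coeff_X_mul]
      rcases eq_or_lt_of_le (Nat.succ_le_of_lt hm) with e | lt
      · have hmn : m' = n := by omega
        subst hmn
        rw [hcomptop, hP1]
        ring
      · rw [coeff_eq_zero_of_natDegree_lt
            (show ((P n).comp (X + C (-1))).natDegree < m' by rw [hcompdeg]; omega),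
          coeff_eq_zero_of_natDegree_lt
            (show (P (n+1)).natDegree < m' + 1 by rw [hdeg]; omega)]
        ring
    obtain ⟨c, hc⟩ := span_lemma P hmonic hdeg n Q hQdeg
    have hck : ∀ k, k < n+1 → c k * h k = Lm w (Q * P k) := by
      intro k hk
      rw [hc, Finset.sum_mul, Lm_sum w hsum,
        Finset.sum_congr rfl (fun j _ => by rw [mul_assoc, LC, horth'])]
      simp only [mul_ite, mul_zero]
      rw [Finset.sum_ite_eq' (Finset.range (n+1)) k (fun j => c j * h j),
        if_pos (Finset.mem_range.mpr hk)]
    have hQP : ∀ k, k ≤ n → Lm w (Q * P k)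
        = z * Lm w (((X + C a) * (P k).comp (X + C 1)) * P n) := by
      intro k hk
      have hsplit : Q * P k = X * ((P n).comp (X + C (-1)) * P k) - P (n+1) * P k := by
        rw [hQ]; ring
      rw [hsplit, Lsub, horthne (n+1) k (by omega), sub_zero]
      have hid0 : (X + C (1:ℝ)).comp (X + C (-1)) = X := by
        rw [add_comp, X_comp, C_comp]
        rw [show C (-1 : ℝ) = -C 1 from by rw [map_neg]]
        ring
      have hid1 : ((P k).comp (X + C 1)).comp (X + C (-1)) = P k := by
        rw [comp_assoc, hid0, comp_X]
      have h2 : (P n).comp (X + C (-1)) * P k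
          = (P n * (P k).comp (X + C 1)).comp (X + C (-1)) := by
        rw [mul_comp, hid1]
      rw [h2, Lshift,
        show (X + C a) * (P n * (P k).comp (X + C 1))
          = ((X + C a) * (P k).comp (X + C 1)) * P n from by ring]
    have hclow : ∀ k, k + 1 < n → c k = 0 := by
      intro k hk
      have h1 : Lm w (((X + C a) * (P k).comp (X + C 1)) * P n) = 0 := by
        apply pairlt
        apply lt_of_le_of_lt (natDegree_mul_le)
        rw [natDegree_X_add_C, hcompdeg]
        omega
      have h2 := hck k (by omega)
      rw [hQP k (by omega), h1, mul_zero] at h2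
      exact (mul_eq_zero.mp h2).resolve_right (hh k)
    have hcn1 : 1 ≤ n → c (n-1) = z * γ n := by
      intro hn
      have hco := coeff_X_add_C_mul a ((P (n-1)).comp (X + C 1)) (n-1)
      rw [show n - 1 + 1 = n from by omega] at hco
      have hg : Lm w (((X + C a) * (P (n-1)).comp (X + C 1)) * P n) = h n := by
        rw [pairle _ n (by
            apply le_trans (natDegree_mul_le)
            rw [natDegree_X_add_C, hcompdeg]
            omega),
          hco, hcomptop,
          coeff_eq_zero_of_natDegree_lt (by rw [hcompdeg]; omega)]
        ring
      have h2 := hck (n-1) (by omega)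
      rw [hQP (n-1) (by omega), hg] at h2
      have hhn : h n = γ n * h (n-1) := by
        have h3 := hhγ (n-1)
        rwa [show n - 1 + 1 = n from by omega] at h3
      rw [hhn] at h2
      exact mul_right_cancel₀ (hh (n-1)) (by linear_combination h2)
    have hcn : c n = z * (β n + a + (n:ℝ)) := by
      have key : Lm w (((X + C a) * (P n).comp (X + C 1)) * P n) = (β n + a + (n:ℝ)) * h n := by
        rcases Nat.eq_zero_or_pos n with h0 | h0
        · subst h0
          have hP0 : P 0 = 1 := (Monic.natDegree_eq_zero (hmonic 0)).mp (hdeg 0)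
          have hcomp0 : (P 0).comp (X + C 1) = P 0 := by rw [hP0, one_comp]
          rw [hcomp0,
            show (X + C a) * P 0 * P 0 = (X * P 0) * P 0 + C a * (P 0 * P 0) from by ring,
            Ladd, LC, hβL 0, horth', if_pos rfl]
          push_cast
          ring
        · set D : ℝ[X] := (P n).comp (X + C 1) - P n with hD
          have hDdeg : D.natDegree ≤ n - 1 := by
            rw [natDegree_le_iff_coeff_eq_zero]
            intro m hm
            rcases eq_or_lt_of_le (Nat.succ_le_of_lt hm) with e | lt
            · have hmn : m = n := by omega
              subst hmn
              rw [hD, coeff_sub, hcomptop, hP1]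
              ring
            · rw [hD, coeff_sub,
                coeff_eq_zero_of_natDegree_lt (by rw [hcompdeg]; omega),
                coeff_eq_zero_of_natDegree_lt (by rw [hdeg]; omega)]
              ring
          have hsplit : ((X + C a) * (P n).comp (X + C 1)) * P n
              = (X * P n) * P n + C a * (P n * P n) + ((X + C a) * D) * P n := by
            rw [hD]; ring
          have hDco := coeff_X_add_C_mul a D (n-1)
          rw [show n - 1 + 1 = n from by omega] at hDco
          have hDval : Lm w (((X + C a) * D) * P n) = (n:ℝ) * h n := by
            rw [pairle _ _ (by
                apply le_trans (natDegree_mul_le)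
                rw [natDegree_X_add_C]
                omega),
              hDco,
              show D.coeff (n-1) = (n:ℝ) from by
                rw [hD, coeff_sub, hcompsub n 1 h0]; ring,
              show D.coeff n = 0 from by rw [hD, coeff_sub, hcomptop, hP1]; ring]
            ring
          rw [hsplit, Ladd, Ladd, hβL n, LC, horth', if_pos rfl, hDval]
          ring
      have h2 := hck n (by omega)
      rw [hQP n (by omega), key] at h2
      exact mul_right_cancel₀ (hh n) (by linear_combination h2)
    -- reconstruct
    rcases Nat.eq_zero_or_pos n with hn0 | hn1
    · subst hn0
      have hQ0 : Q = C (c 0) * P 0 := by rw [hc, Finset.sum_range_one]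
      rw [hQ] at hQ0
      simp only [hγ0, mul_zero, map_zero, zero_mul, add_zero]
      rw [← hcn]
      linear_combination hQ0
    · have hsum3 : Q = C (c (n-1)) * P (n-1) + C (c n) * P n := by
        rw [hc, show n + 1 = (n-1) + 1 + 1 from by omega, Finset.sum_range_succ,
          Finset.sum_range_succ, show n - 1 + 1 = n from by omega,
          Finset.sum_eq_zero (fun k hk => by
            rw [hclow k (by have := Finset.mem_range.mp hk; omega), map_zero, zero_mul])]
        ring
      rw [hQ] at hsum3
      rw [hcn1 hn1, hcn] at hsum3
      linear_combination hsum3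
  -- pairing of the structure relation
  have SAPair : ∀ n m : ℕ, Lm w ((X * (P n).comp (X + C (-1))) * P m)
      = (if n+1 = m then h (n+1) else 0) + z * (β n + a + (n:ℝ)) * (if n = m then h n else 0)
        + z * γ n * (if n-1 = m then h (n-1) else 0) := by
    intro n m
    rw [SA n,
      show (P (n+1) + C (z * (β n + a + (n:ℝ))) * P n + C (z * γ n) * P (n-1)) * P m
        = P (n+1) * P m + C (z * (β n + a + (n:ℝ))) * (P n * P m)
          + C (z * γ n) * (P (n-1) * P m) from by ring,
      Ladd, Ladd, LC, LC, horth', horth', horth']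
  -- Step B
  have SB : ∀ n, z * (β n + a + (n:ℝ)) = β n - n := by
    intro n
    have e1 : Lm w ((X * (P n).comp (X + C (-1))) * P n) = z * (β n + a + (n:ℝ)) * h n := by
      rw [SAPair n n, if_neg (by omega), if_pos rfl]
      rcases Nat.eq_zero_or_pos n with h0 | h0
      · rw [h0, hγ0]; ring
      · rw [if_neg (by omega)]; ring
    have e2 : Lm w ((X * (P n).comp (X + C (-1))) * P n) = (β n - n) * h n := by
      rw [show (X * (P n).comp (X + C (-1))) * P n = (P n).comp (X + C (-1)) * (X * P n)
          from by ring, hrec n,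
        show (P n).comp (X + C (-1)) * (P (n+1) + C (β n) * P n + C (γ n) * P (n-1))
          = (P n).comp (X + C (-1)) * P (n+1) + C (β n) * ((P n).comp (X + C (-1)) * P n)
            + C (γ n) * ((P n).comp (X + C (-1)) * P (n-1)) from by ring,
        Ladd, Ladd, LC, LC, pairlt _ _ (by rw [hcompdeg]; omega), TP_self n]
      have hlast : γ n * Lm w ((P n).comp (X + C (-1)) * P (n-1)) = -(n:ℝ) * h n := by
        rcases Nat.eq_zero_or_pos n with h0 | h0
        · rw [h0, hγ0]; simp
        · have hhn : h n = γ n * h (n-1) := by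
            have h3 := hhγ (n-1)
            rwa [show n - 1 + 1 = n from by omega] at h3
          rw [TP_pred n h0, hhn]; ring
      rw [hlast]; ring
    exact mul_right_cancel₀ (hh n) (by rw [← e1, e2])
  -- Step C
  have SC : ∀ n, (1 - z) * (γ (n+1) - γ n) = β n - n := by
    intro n
    have way1 : Lm w ((X * (P (n+1)).comp (X + C (-1))) * P n) = z * γ (n+1) * h n := by
      rw [SAPair (n+1) n, if_neg (by omega), if_neg (by omega), Nat.add_sub_cancel, if_pos rfl]
      ring
    have hT'Pn : Lm w ((P (n+1)).comp (X + C (-1)) * P n) = -((n:ℝ)+1) * h n := by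
      have h3 := TP_pred (n+1) (by omega)
      rw [Nat.add_sub_cancel] at h3
      rw [h3]
      push_cast
      ring
    have e : Lm w ((X * (P (n+1)).comp (X + C (-1))) * P n)
        = h (n+1) + β n * (-((n:ℝ)+1) * h n)
          + γ n * Lm w ((P (n+1)).comp (X + C (-1)) * P (n-1)) := by
      rw [show (X * (P (n+1)).comp (X + C (-1))) * P n
          = (P (n+1)).comp (X + C (-1)) * (X * P n) from by ring, hrec n,
        show (P (n+1)).comp (X + C (-1)) * (P (n+1) + C (β n) * P n + C (γ n) * P (n-1))
          = (P (n+1)).comp (X + C (-1)) * P (n+1)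
            + C (β n) * ((P (n+1)).comp (X + C (-1)) * P n)
            + C (γ n) * ((P (n+1)).comp (X + C (-1)) * P (n-1)) from by ring,
        Ladd, Ladd, LC, LC, hT'Pn, TP_self (n+1)]
    rcases Nat.eq_zero_or_pos n with h0 | h0
    · subst h0
      rw [hγ0] at e ⊢
      rw [hhγ 0] at e
      have eq := way1.symm.trans e
      have : ((1 - z) * (γ (0+1) - 0) - (β 0 - (0:ℕ))) * h 0 = 0 := by
        push_cast
        push_cast at eq
        linear_combination -eq
      have h4 := (mul_eq_zero.mp this).resolve_right (hh 0)
      push_cast at h4 ⊢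
      linarith
    · have hT'Pn1 : Lm w ((P (n+1)).comp (X + C (-1)) * P (n-1))
          = (z * γ n + (n:ℝ) + (n:ℝ) * β n - γ n) * h (n-1) := by
        have hP' : P (n+1) = X * P n - C (β n) * P n - C (γ n) * P (n-1) := by
          linear_combination (-(1:ℝ[X])) * hrec n
        have hdec : (P (n+1)).comp (X + C (-1))
            = (X + C (-1)) * (P n).comp (X + C (-1)) - C (β n) * (P n).comp (X + C (-1))
              - C (γ n) * (P (n-1)).comp (X + C (-1)) := by
          rw [hP']
          simp only [sub_comp, mul_comp, X_comp, C_comp]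
        rw [hdec,
          show ((X + C (-1)) * (P n).comp (X + C (-1)) - C (β n) * (P n).comp (X + C (-1))
              - C (γ n) * (P (n-1)).comp (X + C (-1))) * P (n-1)
            = (X * (P n).comp (X + C (-1))) * P (n-1)
              + C (-1) * ((P n).comp (X + C (-1)) * P (n-1))
              - C (β n) * ((P n).comp (X + C (-1)) * P (n-1))
              - C (γ n) * ((P (n-1)).comp (X + C (-1)) * P (n-1)) from by ring,
          Lsub, Lsub, Ladd, LC, LC, LC, SAPair n (n-1), TP_pred n h0, TP_self (n-1),
          if_neg (by omega), if_neg (by omega), if_pos rfl]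
        ring
      have hγh : γ n * h (n-1) = h n := by
        have h3 := hhγ (n-1)
        rw [show n - 1 + 1 = n from by omega] at h3
        linarith
      rw [hT'Pn1, hhγ n] at e
      have eq := way1.symm.trans e
      have key : ((1 - z) * (γ (n+1) - γ n) - (β n - (n:ℝ))) * h n = 0 := by
        linear_combination (-(1:ℝ)) * eq - (z * γ n + (n:ℝ) + (n:ℝ) * β n - γ n) * hγh
      have h4 := (mul_eq_zero.mp key).resolve_right (hh n)
      linarith
  -- conclusion
  intro n
  have hXY : (X - 1 : ℝ[X]) = X + C (-1) := by
    rw [show C (-1 : ℝ) = -C 1 from by rw [map_neg], C_1]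
    ring
  have hc2 : (1 - z) * (γ (n+1) - γ n) = z * (β n + a + (n:ℝ)) := (SC n).trans (SB n).symm
  rw [hXY, hc2, SA n]
  ring
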